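/- Let l < 0 < u and set α = min(tanh(l)/l, tanh(u)/u). Then for every x ∈ [l, u], (tanh(x) − αx)(x − tanh(x)) ≥ 0; that is, tanh satisfies the local sector constraint [α, 1] on [l, u]. -/

import Mathlib

open Real Set

lemma my_tanh_hasDerivAt (x : ℝ) : HasDerivAt Real.tanh (1 - Real.tanh x ^ 2) x := by
  have h := (Real.hasDerivAt_sinh x).div (Real.hasDerivAt_cosh x) (Real.cosh_pos x).ne'
  have he : (fun y => Real.sinh y / Real.cosh y) = Real.tanh := by
    funext y; rw [Real.tanh_eq_sinh_div_cosh]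
  rw [show (Real.sinh / Real.cosh) = Real.tanh from he] at h
  refine h.congr_deriv ?_
  have h1 := Real.cosh_sq_sub_sinh_sq x
  have hc := (Real.cosh_pos x).ne'
  rw [Real.tanh_eq_sinh_div_cosh]
  field_simp

lemma my_one_sub_tanh_sq_pos (x : ℝ) : 0 < 1 - Real.tanh x ^ 2 := by
  have h1 := Real.cosh_sq_sub_sinh_sq x
  have hc := Real.cosh_pos x
  rw [Real.tanh_eq_sinh_div_cosh]
  have : Real.sinh x ^ 2 / Real.cosh x ^ 2 < 1 := by
    rw [div_lt_one (by positivity)]; nlinarith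
  rw [div_pow]; linarith

lemma my_sub_tanh_mono : Monotone (fun x => x - Real.tanh x) := by
  apply monotone_of_deriv_nonneg
  · exact differentiable_id.sub fun x => (my_tanh_hasDerivAt x).differentiableAt
  · intro x
    have h : HasDerivAt (fun y => y - Real.tanh y) (1 - (1 - Real.tanh x ^ 2)) x :=
      (hasDerivAt_id x).sub (my_tanh_hasDerivAt x)
    rw [h.deriv]; nlinarith [sq_nonneg (Real.tanh x)]

lemma my_tanh_le_self {x : ℝ} (hx : 0 ≤ x) : Real.tanh x ≤ x := by
  have := my_sub_tanh_mono hx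
  simp only [Real.tanh_zero, sub_zero] at this
  linarith

lemma my_self_le_tanh {x : ℝ} (hx : x ≤ 0) : x ≤ Real.tanh x := by
  have := my_sub_tanh_mono hx
  simp only [Real.tanh_zero, sub_zero] at this
  linarith

lemma my_tanh_concave : ConcaveOn ℝ (Set.Ici (0:ℝ)) Real.tanh := by
  apply concaveOn_of_hasDerivWithinAt2_nonpos (f' := fun x => 1 - Real.tanh x ^ 2)
    (f'' := fun x => -((1 - Real.tanh x ^ 2) * (2 * Real.tanh x))) (convex_Ici 0)
  · exact (Real.continuous_sinh.div Real.continuous_cosh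
      fun x => (Real.cosh_pos x).ne').congr (fun y => (Real.tanh_eq_sinh_div_cosh y).symm)
      |>.continuousOn
  · intro x hx
    exact (my_tanh_hasDerivAt x).hasDerivWithinAt
  · intro x hx
    have h : HasDerivAt (fun y => 1 - Real.tanh y ^ 2)
        (-((1 - Real.tanh x ^ 2) * (2 * Real.tanh x))) x := by
      have := ((my_tanh_hasDerivAt x).pow 2).const_sub 1
      refine this.congr_deriv ?_
      rw [show (2:ℕ) - 1 = 1 from rfl]; push_cast; ring
    exact h.hasDerivWithinAt
  · intro x hx
    rw [interior_Ici] at hx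
    have h1 := my_one_sub_tanh_sq_pos x
    have h2 : 0 ≤ Real.tanh x := by
      rw [Real.tanh_eq_sinh_div_cosh]
      exact div_nonneg (Real.sinh_nonneg_iff.2 (le_of_lt hx)) (Real.cosh_pos x).le
    nlinarith

lemma my_key {u x : ℝ} (hu : 0 < u) (hx : 0 ≤ x) (hxu : x ≤ u) :
    Real.tanh u / u * x ≤ Real.tanh x := by
  have ht : x / u ∈ Set.Icc (0:ℝ) 1 := ⟨div_nonneg hx hu.le, (div_le_one hu).2 hxu⟩
  have h := my_tanh_concave.2 (Set.mem_Ici.2 hu.le) (Set.mem_Ici.2 le_rfl)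
    ht.1 (by linarith [ht.2]) (by ring : x / u + (1 - x / u) = 1)
  simp only [smul_eq_mul, mul_zero, add_zero, Real.tanh_zero] at h
  have hxx : x / u * u = x := div_mul_cancel₀ x hu.ne'
  rw [hxx] at h
  calc Real.tanh u / u * x = x / u * Real.tanh u := by ring
    _ ≤ _ := by linarith

theorem stmt_13 (l u : ℝ) (hl : l < 0) (hu : 0 < u)
    (α : ℝ) (hα : α = min (Real.tanh l / l) (Real.tanh u / u)) :
    ∀ x ∈ Set.Icc l u, 0 ≤ (Real.tanh x - α * x) * (x - Real.tanh x) := by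
  intro x hx
  obtain ⟨hxl, hxu⟩ := hx
  have hαu : α ≤ Real.tanh u / u := hα ▸ min_le_right _ _
  have hαl : α ≤ Real.tanh l / l := hα ▸ min_le_left _ _
  rcases le_total 0 x with hx0 | hx0
  · have h2 : 0 ≤ x - Real.tanh x := by linarith [my_tanh_le_self hx0]
    have h1 : 0 ≤ Real.tanh x - α * x := by
      have := my_key hu hx0 hxu
      have := mul_le_mul_of_nonneg_right hαu hx0
      linarith
    exact mul_nonneg h1 h2
  · have h2 : x - Real.tanh x ≤ 0 := by linarith [my_self_le_tanh hx0]
    have h1 : Real.tanh x - α * x ≤ 0 := by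
      have hkey := my_key (u := -l) (x := -x) (by linarith) (by linarith) (by linarith)
      rw [Real.tanh_neg, Real.tanh_neg] at hkey
      have hll : Real.tanh l / l = -Real.tanh l / -l := by rw [neg_div_neg_eq]
      have := mul_le_mul_of_nonneg_right hαl (by linarith : (0:ℝ) ≤ -x)
      rw [hll] at this
      linarith
    nlinarith
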